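/- arXiv:2008.01665 — 4 statements merged into one kernel-verified Lean document; each statement's English description precedes it below -/
import Mathlib

section
/- Let μ and ν be probability mass functions on a finite type Ω such that ν(o) > 0 whenever μ(o) > 0, and define α(λ) = log Σ_{o : μ(o)>0} μ(o)·(μ(o)/ν(o))^λ. Then for every real λ ≥ 0, every real ε, and every subset S ⊆ Ω, μ(S) ≤ exp(ε)·ν(S) + exp(α(λ) − λ·ε). In particular, the pair (μ, ν) satisfies the (ε, δ)-differential-privacy inequality with δ = exp(α(λ) − λ·ε). -/
open scoped Classical

/-- Tail bound of the moments accountant: for every `λ ≥ 0` and every `ε`, the pair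
`(μ, ν)` satisfies the `(ε, δ)`-differential-privacy inequality with
`δ = exp(α(λ) - λ·ε)`, where `α(λ) = log Σ_{μ(o)>0} μ(o)·(μ(o)/ν(o))^λ`. -/
theorem moments_accountant_tail_bound {Ω : Type*} [Fintype Ω]
    (μ ν : Ω → ℝ)
    (hμ0 : ∀ o, 0 ≤ μ o) (hμ1 : ∑ o, μ o = 1)
    (hν0 : ∀ o, 0 ≤ ν o) (hν1 : ∑ o, ν o = 1)
    (hsupp : ∀ o, 0 < μ o → 0 < ν o)
    (lam : ℝ) (hlam : 0 ≤ lam) (ε : ℝ) :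
    ∀ S : Finset Ω, ∑ o ∈ S, μ o ≤
      Real.exp ε * ∑ o ∈ S, ν o +
        Real.exp
          ((Real.log (∑ o ∈ Finset.univ.filter (fun o => 0 < μ o),
              μ o * (μ o / ν o) ^ lam)) - lam * ε) := by
  intro S
  set T := ∑ o ∈ Finset.univ.filter (fun o => 0 < μ o), μ o * (μ o / ν o) ^ lam with hT
  have hterm : ∀ o ∈ Finset.univ.filter (fun o => 0 < μ o),
      0 ≤ μ o * (μ o / ν o) ^ lam := by
    intro o ho
    simp only [Finset.mem_filter] at ho
    have h1 := ho.2
    have h2 := hsupp o h1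
    positivity
  have hTpos : 0 < T := by
    obtain ⟨o, ho⟩ : ∃ o, 0 < μ o := by
      by_contra h
      push_neg at h
      have : (∑ o, μ o) ≤ 0 := Finset.sum_nonpos fun o _ => h o
      linarith
    refine Finset.sum_pos' hterm ⟨o, by simp [ho], ?_⟩
    have h2 := hsupp o ho
    positivity
  have hexp : Real.exp (Real.log T - lam * ε) = T * Real.exp (-(lam * ε)) := by
    rw [Real.exp_sub, Real.exp_log hTpos, div_eq_mul_inv, ← Real.exp_neg]
  rw [hexp]
  set B := S.filter (fun o => Real.exp ε * ν o < μ o) with hB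
  have hsplit := Finset.sum_filter_add_sum_filter_not S
    (fun o => Real.exp ε * ν o < μ o) μ
  have hgood : ∑ o ∈ S.filter (fun o => ¬ Real.exp ε * ν o < μ o), μ o ≤
      Real.exp ε * ∑ o ∈ S, ν o := by
    calc ∑ o ∈ S.filter (fun o => ¬ Real.exp ε * ν o < μ o), μ o
        ≤ ∑ o ∈ S.filter (fun o => ¬ Real.exp ε * ν o < μ o), Real.exp ε * ν o := by
          refine Finset.sum_le_sum ?_
          intro o ho
          simp only [Finset.mem_filter, not_lt] at ho
          exact ho.2
      _ ≤ ∑ o ∈ S, Real.exp ε * ν o := by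
          refine Finset.sum_le_sum_of_subset_of_nonneg (Finset.filter_subset _ _) ?_
          intro o _ _
          have := hν0 o
          positivity
      _ = Real.exp ε * ∑ o ∈ S, ν o := by rw [Finset.mul_sum]
  have hBsub : B ⊆ Finset.univ.filter (fun o => 0 < μ o) := by
    intro o ho
    simp only [hB, Finset.mem_filter] at ho ⊢
    have := hν0 o
    constructor
    · exact Finset.mem_univ o
    · nlinarith [Real.exp_pos ε, ho.2]
  have hbad : ∑ o ∈ B, μ o ≤ T * Real.exp (-(lam * ε)) := by
    have h1 : ∑ o ∈ B, μ o ≤ ∑ o ∈ B, μ o * (μ o / ν o) ^ lam * Real.exp (-(lam * ε)) := by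
      refine Finset.sum_le_sum ?_
      intro o ho
      have hom : 0 < μ o := by
        have := hBsub ho
        simpa using this
      have hon : 0 < ν o := hsupp o hom
      simp only [hB, Finset.mem_filter] at ho
      have hratio : Real.exp ε < μ o / ν o := by
        rw [lt_div_iff₀ hon]
        linarith [ho.2]
      have hr : Real.exp (lam * ε) ≤ (μ o / ν o) ^ lam := by
        calc Real.exp (lam * ε) = Real.exp ε ^ lam := by
              rw [← Real.exp_mul, mul_comm]
          _ ≤ (μ o / ν o) ^ lam :=
              Real.rpow_le_rpow (Real.exp_pos ε).le hratio.le hlam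
      have key : (1:ℝ) ≤ (μ o / ν o) ^ lam * Real.exp (-(lam * ε)) := by
        rw [Real.exp_neg]
        calc (1:ℝ) = Real.exp (lam * ε) * (Real.exp (lam * ε))⁻¹ := by
              rw [mul_inv_cancel₀ (Real.exp_pos _).ne']
          _ ≤ (μ o / ν o) ^ lam * (Real.exp (lam * ε))⁻¹ := by
              exact mul_le_mul_of_nonneg_right hr (by positivity)
      calc μ o = μ o * 1 := (mul_one _).symm
        _ ≤ μ o * ((μ o / ν o) ^ lam * Real.exp (-(lam * ε))) := by
            exact mul_le_mul_of_nonneg_left key hom.le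
        _ = μ o * (μ o / ν o) ^ lam * Real.exp (-(lam * ε)) := by ring
    have h2 : ∑ o ∈ B, μ o * (μ o / ν o) ^ lam * Real.exp (-(lam * ε)) ≤
        T * Real.exp (-(lam * ε)) := by
      rw [hT, Finset.sum_mul]
      refine Finset.sum_le_sum_of_subset_of_nonneg hBsub ?_
      intro o ho _
      have h := hterm o ho
      have := Real.exp_pos (-(lam * ε))
      positivity
    linarith
  have : ∑ o ∈ S, μ o = ∑ o ∈ B, μ o +
      ∑ o ∈ S.filter (fun o => ¬ Real.exp ε * ν o < μ o), μ o := hsplit.symm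
  linarith
end

section
/- Let μ₁, ν₁ be probability mass functions on a finite type Ω₁ and μ₂, ν₂ be probability mass functions on a finite type Ω₂, with ν₁(o) > 0 whenever μ₁(o) > 0 and ν₂(o) > 0 whenever μ₂(o) > 0. Let μ and ν be the product probability mass functions on Ω₁ × Ω₂ given by μ(o₁, o₂) = μ₁(o₁)·μ₂(o₂) and ν(o₁, o₂) = ν₁(o₁)·ν₂(o₂). Then for every real λ, the log moment generating function of the privacy loss of the pair (μ, ν) equals the sum of those of (μ₁, ν₁) and (μ₂, ν₂): log Σ_{(o₁,o₂)} μ(o₁,o₂)·(μ(o₁,o₂)/ν(o₁,o₂))^λ = log Σ_{o₁} μ₁(o₁)·(μ₁(o₁)/ν₁(o₁))^λ + log Σ_{o₂} μ₂(o₂)·(μ₂(o₂)/ν₂(o₂))^λ (sums taken over points of positive μ-mass). -/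
open scoped Classical

/-- Composability of the moments accountant for two independently composed mechanisms:
the log moment generating function of the privacy loss of the product pair equals the
sum of the log moment generating functions of the two component pairs. -/
theorem moments_accountant_composability {Ω₁ Ω₂ : Type*} [Fintype Ω₁] [Fintype Ω₂]
    (μ₁ ν₁ : Ω₁ → ℝ) (μ₂ ν₂ : Ω₂ → ℝ)
    (hμ₁0 : ∀ o, 0 ≤ μ₁ o) (hμ₁1 : ∑ o, μ₁ o = 1)
    (hν₁0 : ∀ o, 0 ≤ ν₁ o) (hν₁1 : ∑ o, ν₁ o = 1)
    (hμ₂0 : ∀ o, 0 ≤ μ₂ o) (hμ₂1 : ∑ o, μ₂ o = 1)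
    (hν₂0 : ∀ o, 0 ≤ ν₂ o) (hν₂1 : ∑ o, ν₂ o = 1)
    (hsupp₁ : ∀ o, 0 < μ₁ o → 0 < ν₁ o)
    (hsupp₂ : ∀ o, 0 < μ₂ o → 0 < ν₂ o)
    (lam : ℝ) :
    Real.log (∑ o ∈ Finset.univ.filter (fun o : Ω₁ × Ω₂ => 0 < μ₁ o.1 * μ₂ o.2),
        (μ₁ o.1 * μ₂ o.2) * ((μ₁ o.1 * μ₂ o.2) / (ν₁ o.1 * ν₂ o.2)) ^ lam) =
      Real.log (∑ o₁ ∈ Finset.univ.filter (fun o₁ => 0 < μ₁ o₁),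
          μ₁ o₁ * (μ₁ o₁ / ν₁ o₁) ^ lam) +
      Real.log (∑ o₂ ∈ Finset.univ.filter (fun o₂ => 0 < μ₂ o₂),
          μ₂ o₂ * (μ₂ o₂ / ν₂ o₂) ^ lam) := by
  set s₁ := Finset.univ.filter (fun o₁ => 0 < μ₁ o₁) with hs₁
  set s₂ := Finset.univ.filter (fun o₂ => 0 < μ₂ o₂) with hs₂
  have hfilter : Finset.univ.filter (fun o : Ω₁ × Ω₂ => 0 < μ₁ o.1 * μ₂ o.2) = s₁ ×ˢ s₂ := by
    ext o
    simp only [hs₁, hs₂, Finset.mem_filter, Finset.mem_univ, true_and, Finset.mem_product]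
    constructor
    · intro h
      constructor
      · rcases (hμ₁0 o.1).lt_or_eq with h1 | h1
        · exact h1
        · exfalso; rw [← h1] at h; simp at h
      · rcases (hμ₂0 o.2).lt_or_eq with h2 | h2
        · exact h2
        · exfalso; rw [← h2] at h; simp at h
    · intro ⟨h1, h2⟩; exact mul_pos h1 h2
  have hprod : (∑ o ∈ Finset.univ.filter (fun o : Ω₁ × Ω₂ => 0 < μ₁ o.1 * μ₂ o.2),
      (μ₁ o.1 * μ₂ o.2) * ((μ₁ o.1 * μ₂ o.2) / (ν₁ o.1 * ν₂ o.2)) ^ lam)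
      = (∑ o₁ ∈ s₁, μ₁ o₁ * (μ₁ o₁ / ν₁ o₁) ^ lam) *
        (∑ o₂ ∈ s₂, μ₂ o₂ * (μ₂ o₂ / ν₂ o₂) ^ lam) := by
    rw [hfilter, Finset.sum_mul_sum]
    rw [Finset.sum_product]
    refine Finset.sum_congr rfl fun o₁ h₁ => ?_
    refine Finset.sum_congr rfl fun o₂ h₂ => ?_
    have hm1 : 0 < μ₁ o₁ := by simpa [hs₁] using h₁
    have hm2 : 0 < μ₂ o₂ := by simpa [hs₂] using h₂
    have hn1 := hsupp₁ o₁ hm1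
    have hn2 := hsupp₂ o₂ hm2
    have hd : (μ₁ o₁ * μ₂ o₂) / (ν₁ o₁ * ν₂ o₂) = (μ₁ o₁ / ν₁ o₁) * (μ₂ o₂ / ν₂ o₂) := by
      ring
    rw [hd, Real.mul_rpow (by positivity) (by positivity)]
    ring
  have hpos₁ : 0 < ∑ o₁ ∈ s₁, μ₁ o₁ * (μ₁ o₁ / ν₁ o₁) ^ lam := by
    have hne : s₁.Nonempty := by
      by_contra h
      rw [Finset.not_nonempty_iff_eq_empty] at h
      have : (1:ℝ) ≤ 0 := by
        rw [← hμ₁1]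
        have : ∑ o, μ₁ o = ∑ o ∈ s₁, μ₁ o := by
          refine (Finset.sum_subset (Finset.filter_subset _ _) ?_).symm
          intro o _ ho
          rcases (hμ₁0 o).lt_or_eq with h1 | h1
          · exfalso; exact ho (by simp [hs₁, h1])
          · exact h1.symm
        rw [this, h, Finset.sum_empty]
      linarith
    refine Finset.sum_pos (fun o ho => ?_) hne
    have hm : 0 < μ₁ o := by simpa [hs₁] using ho
    have := hsupp₁ o hm
    positivity
  have hpos₂ : 0 < ∑ o₂ ∈ s₂, μ₂ o₂ * (μ₂ o₂ / ν₂ o₂) ^ lam := by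
    have hne : s₂.Nonempty := by
      by_contra h
      rw [Finset.not_nonempty_iff_eq_empty] at h
      have : (1:ℝ) ≤ 0 := by
        rw [← hμ₂1]
        have : ∑ o, μ₂ o = ∑ o ∈ s₂, μ₂ o := by
          refine (Finset.sum_subset (Finset.filter_subset _ _) ?_).symm
          intro o _ ho
          rcases (hμ₂0 o).lt_or_eq with h1 | h1
          · exfalso; exact ho (by simp [hs₂, h1])
          · exact h1.symm
        rw [this, h, Finset.sum_empty]
      linarith
    refine Finset.sum_pos (fun o ho => ?_) hne
    have hm : 0 < μ₂ o := by simpa [hs₂] using ho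
    have := hsupp₂ o hm
    positivity
  rw [hprod, Real.log_mul hpos₁.ne' hpos₂.ne']
end

section
/- Let A and B be finite types, let μ₁, ν₁ be probability mass functions on A, and let κ, η : A → (probability mass functions on B) be two kernels, such that ν₁(a) > 0 whenever μ₁(a) > 0, and for every a ∈ A, η(a)(b) > 0 whenever κ(a)(b) > 0. Define the composed probability mass functions μ and ν on A × B by μ(a, b) = μ₁(a)·κ(a)(b) and ν(a, b) = ν₁(a)·η(a)(b). Then for every real λ ≥ 0, log Σ_{(a,b) : μ(a,b)>0} μ(a,b)·(μ(a,b)/ν(a,b))^λ ≤ log Σ_{a : μ₁(a)>0} μ₁(a)·(μ₁(a)/ν₁(a))^λ + max_{a ∈ A} log Σ_{b : κ(a)(b)>0} κ(a)(b)·(κ(a)(b)/η(a)(b))^λ. -/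
open scoped Classical

/-- Composability of the moments accountant for two-fold adaptive composition: the log
moment generating function of the privacy loss of the composed pair is at most the sum of
that of the first pair and the worst case (over auxiliary inputs) of that of the second. -/
theorem moments_accountant_adaptive_composability
    {A B : Type*} [Fintype A] [Fintype B] [Nonempty A]
    (μ₁ ν₁ : A → ℝ) (κ η : A → B → ℝ)
    (hμ₁0 : ∀ a, 0 ≤ μ₁ a) (hμ₁1 : ∑ a, μ₁ a = 1)
    (hν₁0 : ∀ a, 0 ≤ ν₁ a) (hν₁1 : ∑ a, ν₁ a = 1)
    (hκ0 : ∀ a b, 0 ≤ κ a b) (hκ1 : ∀ a, ∑ b, κ a b = 1)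
    (hη0 : ∀ a b, 0 ≤ η a b) (hη1 : ∀ a, ∑ b, η a b = 1)
    (hsupp₁ : ∀ a, 0 < μ₁ a → 0 < ν₁ a)
    (hsupp₂ : ∀ a b, 0 < κ a b → 0 < η a b)
    (lam : ℝ) (hlam : 0 ≤ lam) :
    Real.log (∑ p ∈ Finset.univ.filter (fun p : A × B => 0 < μ₁ p.1 * κ p.1 p.2),
        (μ₁ p.1 * κ p.1 p.2) * ((μ₁ p.1 * κ p.1 p.2) / (ν₁ p.1 * η p.1 p.2)) ^ lam) ≤
      Real.log (∑ a ∈ Finset.univ.filter (fun a => 0 < μ₁ a),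
          μ₁ a * (μ₁ a / ν₁ a) ^ lam) +
      Finset.univ.sup' Finset.univ_nonempty (fun a =>
        Real.log (∑ b ∈ Finset.univ.filter (fun b => 0 < κ a b),
          κ a b * (κ a b / η a b) ^ lam)) := by
  classical
  set w : A → ℝ := fun a => μ₁ a * (μ₁ a / ν₁ a) ^ lam with hw
  set g : A → B → ℝ := fun a b => κ a b * (κ a b / η a b) ^ lam with hg
  have hw0 : ∀ a, 0 ≤ w a := fun a =>
    mul_nonneg (hμ₁0 a) (Real.rpow_nonneg (div_nonneg (hμ₁0 a) (hν₁0 a)) lam)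
  have hg0 : ∀ a b, 0 ≤ g a b := fun a b =>
    mul_nonneg (hκ0 a b) (Real.rpow_nonneg (div_nonneg (hκ0 a b) (hη0 a b)) lam)
  set f : A → ℝ := fun a => ∑ b ∈ Finset.univ.filter (fun b => 0 < κ a b), g a b with hfdef
  -- unfilter the inner sums
  have hffull : ∀ a, f a = ∑ b, g a b := by
    intro a
    refine Finset.sum_filter_of_ne fun b _ hb => ?_
    by_contra h
    have : κ a b = 0 := le_antisymm (not_lt.mp h) (hκ0 a b)
    exact hb (by simp [hg, this])
  have hS1full : (∑ a ∈ Finset.univ.filter (fun a => 0 < μ₁ a), w a) = ∑ a, w a := by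
    refine Finset.sum_filter_of_ne fun a _ ha => ?_
    by_contra h
    have : μ₁ a = 0 := le_antisymm (not_lt.mp h) (hμ₁0 a)
    exact ha (by simp [hw, this])
  -- rewrite the big sum
  have hT : (∑ p ∈ Finset.univ.filter (fun p : A × B => 0 < μ₁ p.1 * κ p.1 p.2),
        (μ₁ p.1 * κ p.1 p.2) * ((μ₁ p.1 * κ p.1 p.2) / (ν₁ p.1 * η p.1 p.2)) ^ lam)
      = ∑ a, w a * f a := by
    have hid : ∀ p : A × B,
        (μ₁ p.1 * κ p.1 p.2) * ((μ₁ p.1 * κ p.1 p.2) / (ν₁ p.1 * η p.1 p.2)) ^ lam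
          = w p.1 * g p.1 p.2 := by
      intro p
      rw [← div_mul_div_comm,
        Real.mul_rpow (div_nonneg (hμ₁0 p.1) (hν₁0 p.1))
          (div_nonneg (hκ0 p.1 p.2) (hη0 p.1 p.2))]
      simp only [hw, hg]; ring
    have hfull : (∑ p ∈ Finset.univ.filter (fun p : A × B => 0 < μ₁ p.1 * κ p.1 p.2),
        (μ₁ p.1 * κ p.1 p.2) * ((μ₁ p.1 * κ p.1 p.2) / (ν₁ p.1 * η p.1 p.2)) ^ lam)
        = ∑ p : A × B, (μ₁ p.1 * κ p.1 p.2) * ((μ₁ p.1 * κ p.1 p.2) / (ν₁ p.1 * η p.1 p.2)) ^ lam := by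
      refine Finset.sum_filter_of_ne fun p _ hp => ?_
      by_contra h
      have h0 : μ₁ p.1 * κ p.1 p.2 = 0 :=
        le_antisymm (not_lt.mp h) (mul_nonneg (hμ₁0 p.1) (hκ0 p.1 p.2))
      exact hp (by simp [h0])
    rw [hfull]
    rw [Fintype.sum_prod_type]
    refine Finset.sum_congr rfl fun a _ => ?_
    rw [hffull a, Finset.mul_sum]
    exact Finset.sum_congr rfl fun b _ => hid (a, b)
  -- positivity facts
  obtain ⟨a₀, ha₀⟩ : ∃ a, 0 < μ₁ a := by
    by_contra h
    push_neg at h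
    have : (∑ a, μ₁ a) = 0 := Finset.sum_eq_zero fun a _ =>
      le_antisymm (h a) (hμ₁0 a)
    simp [this] at hμ₁1
  have hwpos : 0 < w a₀ :=
    mul_pos ha₀ (Real.rpow_pos_of_pos (div_pos ha₀ (hsupp₁ a₀ ha₀)) lam)
  have hfpos : ∀ a, 0 < f a := by
    intro a
    obtain ⟨b₀, hb₀⟩ : ∃ b, 0 < κ a b := by
      by_contra h
      push_neg at h
      have : (∑ b, κ a b) = 0 := Finset.sum_eq_zero fun b _ =>
        le_antisymm (h b) (hκ0 a b)
      have h1 := hκ1 a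
      rw [this] at h1
      exact one_ne_zero h1.symm
    rw [hffull a]
    refine Finset.sum_pos' (fun b _ => hg0 a b) ⟨b₀, Finset.mem_univ _, ?_⟩
    exact mul_pos hb₀ (Real.rpow_pos_of_pos (div_pos hb₀ (hsupp₂ a b₀ hb₀)) lam)
  have hS1pos : 0 < ∑ a, w a :=
    Finset.sum_pos' (fun a _ => hw0 a) ⟨a₀, Finset.mem_univ _, hwpos⟩
  -- the max of f
  set M : ℝ := Finset.univ.sup' Finset.univ_nonempty f with hM
  have hMle : ∀ a, f a ≤ M := fun a => Finset.le_sup' f (Finset.mem_univ a)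
  have hMpos : 0 < M := lt_of_lt_of_le (hfpos a₀) (hMle a₀)
  have hTle : (∑ a, w a * f a) ≤ (∑ a, w a) * M := by
    rw [Finset.sum_mul]
    exact Finset.sum_le_sum fun a _ => mul_le_mul_of_nonneg_left (hMle a) (hw0 a)
  have hTpos : 0 < ∑ a, w a * f a :=
    Finset.sum_pos' (fun a _ => mul_nonneg (hw0 a) (hfpos a).le)
      ⟨a₀, Finset.mem_univ _, mul_pos hwpos (hfpos a₀)⟩
  rw [hT, hS1full]
  calc Real.log (∑ a, w a * f a)
      ≤ Real.log ((∑ a, w a) * M) := Real.log_le_log hTpos hTle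
    _ = Real.log (∑ a, w a) + Real.log M := Real.log_mul hS1pos.ne' hMpos.ne'
    _ ≤ Real.log (∑ a, w a) + Finset.univ.sup' Finset.univ_nonempty (fun a => Real.log (f a)) := by
        obtain ⟨a₁, -, ha₁⟩ := Finset.exists_mem_eq_sup' (Finset.univ_nonempty (α := A)) f
        have : Real.log M = Real.log (f a₁) := by rw [hM, ha₁]
        rw [this]
        exact add_le_add_right (Finset.le_sup' (fun a => Real.log (f a)) (Finset.mem_univ a₁)) _
end

section
/- Let k be a natural number, let Ω₁, …, Ω_k be finite types, and for each i let μ_i, ν_i be probability mass functions on Ω_i such that for every subset S ⊆ Ω_i, μ_i(S) ≤ exp(ε)·ν_i(S) + δ (with ε ∈ ℝ and δ ≥ 0). Let μ and ν be the product probability mass functions on Ω₁ × ⋯ × Ω_k given by μ(o₁,…,o_k) = ∏_i μ_i(o_i) and ν(o₁,…,o_k) = ∏_i ν_i(o_i). Then for every subset S ⊆ Ω₁ × ⋯ × Ω_k, μ(S) ≤ exp(k·ε)·ν(S) + k·δ. -/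
/-- Telescoping bound: the difference of two products of nonnegative reals is bounded by a
sum of "hybrid" products where exactly one factor is replaced by the (truncated) difference. -/
lemma dp_tele : ∀ (k : ℕ) (a b : Fin k → ℝ), (∀ i, 0 ≤ a i) → (∀ i, 0 ≤ b i) →
    (∏ i, a i) - (∏ i, b i) ≤
      ∑ j, ∏ i, (if i < j then b i else if i = j then max (a i - b i) 0 else a i) := by
  intro k
  induction k with
  | zero => simp
  | succ k ih =>
    intro a b ha hb
    have h0 : (∏ i : Fin (k+1), (if i < 0 then b i else if i = 0 then max (a i - b i) 0 else a i))
        = max (a 0 - b 0) 0 * ∏ i : Fin k, a i.succ := by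
      rw [Fin.prod_univ_succ]
      simp [Fin.succ_ne_zero]
    have hsucc : ∀ j : Fin k,
        (∏ i : Fin (k+1), (if i < j.succ then b i else if i = j.succ then max (a i - b i) 0 else a i))
        = b 0 * ∏ i : Fin k, (if i < j then b i.succ else if i = j then max (a i.succ - b i.succ) 0 else a i.succ) := by
      intro j
      rw [Fin.prod_univ_succ]
      simp [Fin.succ_pos, Fin.succ_lt_succ_iff, Fin.succ_inj]
    rw [Fin.prod_univ_succ, Fin.prod_univ_succ, Fin.sum_univ_succ, h0,
        Finset.sum_congr rfl (fun j _ => hsucc j), ← Finset.mul_sum]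
    have hA : 0 ≤ ∏ i : Fin k, a i.succ := Finset.prod_nonneg (fun i _ => ha i.succ)
    have key : a 0 * ∏ i : Fin k, a i.succ - b 0 * ∏ i : Fin k, b i.succ
        = (a 0 - b 0) * ∏ i : Fin k, a i.succ
          + b 0 * ((∏ i : Fin k, a i.succ) - ∏ i : Fin k, b i.succ) := by ring
    rw [key]
    exact add_le_add (mul_le_mul_of_nonneg_right (le_max_left _ _) hA)
      (mul_le_mul_of_nonneg_left
        (ih (fun i => a i.succ) (fun i => b i.succ) (fun i => ha i.succ) (fun i => hb i.succ))
        (hb 0))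

/-- Basic composition of differential privacy: if each pair `(μ i, ν i)` satisfies the
`(ε, δ)`-differential-privacy inequality, then the product pair satisfies the
`(k·ε, k·δ)`-differential-privacy inequality. -/
theorem dp_composition (k : ℕ) (Ω : Fin k → Type*) [∀ i, Fintype (Ω i)]
    (μ ν : (i : Fin k) → Ω i → ℝ)
    (hμ0 : ∀ i o, 0 ≤ μ i o) (hμ1 : ∀ i, ∑ o, μ i o = 1)
    (hν0 : ∀ i o, 0 ≤ ν i o) (hν1 : ∀ i, ∑ o, ν i o = 1)
    (ε δ : ℝ) (hδ : 0 ≤ δ)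
    (hDP : ∀ i, ∀ S : Finset (Ω i), ∑ o ∈ S, μ i o ≤ Real.exp ε * ∑ o ∈ S, ν i o + δ) :
    ∀ S : Finset ((i : Fin k) → Ω i),
      ∑ o ∈ S, ∏ i, μ i (o i) ≤
        Real.exp ((k : ℝ) * ε) * ∑ o ∈ S, ∏ i, ν i (o i) + (k : ℝ) * δ := by
  intro S
  set t : (i : Fin k) → Ω i → ℝ := fun i o => min (μ i o) (Real.exp ε * ν i o) with ht
  have ht0 : ∀ i o, 0 ≤ t i o := fun i o =>
    le_min (hμ0 i o) (mul_nonneg (Real.exp_pos ε).le (hν0 i o))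
  have htν : ∀ i o, t i o ≤ Real.exp ε * ν i o := fun i o => min_le_right _ _
  have htμ : ∀ i o, t i o ≤ μ i o := fun i o => min_le_left _ _
  have ht1 : ∀ i, ∑ o, t i o ≤ 1 := by
    intro i
    rw [← hμ1 i]
    exact Finset.sum_le_sum (fun o _ => htμ i o)
  -- the per-coordinate excess mass is at most δ
  have hd : ∀ i, ∑ o, max (μ i o - t i o) 0 ≤ δ := by
    intro i
    set T : Finset (Ω i) := Finset.univ.filter (fun o => Real.exp ε * ν i o < μ i o) with hT
    have he : ∑ o, max (μ i o - t i o) 0 = ∑ o ∈ T, (μ i o - Real.exp ε * ν i o) := by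
      rw [hT, Finset.sum_filter]
      apply Finset.sum_congr rfl
      intro o _
      by_cases h : Real.exp ε * ν i o < μ i o
      · simp only [h, if_true, ht]
        rw [min_eq_right h.le, max_eq_left (by linarith)]
      · simp only [h, if_false, ht]
        rw [min_eq_left (not_lt.mp h), sub_self, max_self]
    have hDPT := hDP i T
    rw [he, Finset.sum_sub_distrib, ← Finset.mul_sum]
    linarith
  have hdnn : ∀ i o, 0 ≤ max (μ i o - t i o) 0 := fun i o => le_max_right _ _
  -- split the sum
  have hsplit : ∑ o ∈ S, ∏ i, μ i (o i)
      = ∑ o ∈ S, ∏ i, t i (o i) + ∑ o ∈ S, ((∏ i, μ i (o i)) - ∏ i, t i (o i)) := by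
    rw [← Finset.sum_add_distrib]
    exact Finset.sum_congr rfl (fun o _ => by ring)
  have h1 : ∑ o ∈ S, ∏ i, t i (o i) ≤ Real.exp ((k : ℝ) * ε) * ∑ o ∈ S, ∏ i, ν i (o i) := by
    rw [Finset.mul_sum]
    apply Finset.sum_le_sum
    intro o _
    calc ∏ i, t i (o i) ≤ ∏ i, (Real.exp ε * ν i (o i)) :=
          Finset.prod_le_prod (fun i _ => ht0 i (o i)) (fun i _ => htν i (o i))
      _ = Real.exp ((k : ℝ) * ε) * ∏ i, ν i (o i) := by
          rw [Finset.prod_mul_distrib, Finset.prod_const, Finset.card_univ, Fintype.card_fin,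
            Real.exp_nat_mul]
  have h2 : ∑ o ∈ S, ((∏ i, μ i (o i)) - ∏ i, t i (o i)) ≤ (k : ℝ) * δ := by
    have hgnn : ∀ (j : Fin k) (o : (i : Fin k) → Ω i) (i : Fin k),
        0 ≤ (if i < j then t i (o i) else if i = j then max (μ i (o i) - t i (o i)) 0 else μ i (o i)) := by
      intro j o i
      by_cases h1 : i < j
      · simpa [h1] using ht0 i (o i)
      · by_cases h2 : i = j
        · simp [h1, h2]
        · simpa [h1, h2] using hμ0 i (o i)
    calc ∑ o ∈ S, ((∏ i, μ i (o i)) - ∏ i, t i (o i))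
        ≤ ∑ o ∈ S, ∑ j, ∏ i, (if i < j then t i (o i) else if i = j then max (μ i (o i) - t i (o i)) 0 else μ i (o i)) := by
          apply Finset.sum_le_sum
          intro o _
          exact dp_tele k (fun i => μ i (o i)) (fun i => t i (o i))
            (fun i => hμ0 i (o i)) (fun i => ht0 i (o i))
      _ ≤ ∑ o : (i : Fin k) → Ω i, ∑ j, ∏ i, (if i < j then t i (o i) else if i = j then max (μ i (o i) - t i (o i)) 0 else μ i (o i)) := by
          apply Finset.sum_le_sum_of_subset_of_nonneg (Finset.subset_univ S)
          intro o _ _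
          exact Finset.sum_nonneg (fun j _ => Finset.prod_nonneg (fun i _ => hgnn j o i))
      _ = ∑ j, ∑ o : (i : Fin k) → Ω i, ∏ i, (if i < j then t i (o i) else if i = j then max (μ i (o i) - t i (o i)) 0 else μ i (o i)) :=
          Finset.sum_comm
      _ = ∑ j : Fin k, ∏ i, ∑ x, (if i < j then t i x else if i = j then max (μ i x - t i x) 0 else μ i x) := by
          apply Finset.sum_congr rfl
          intro j _
          rw [Finset.prod_univ_sum, Fintype.piFinset_univ]
      _ ≤ ∑ j : Fin k, δ := by
          apply Finset.sum_le_sum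
          intro j _
          calc ∏ i, ∑ x, (if i < j then t i x else if i = j then max (μ i x - t i x) 0 else μ i x)
              ≤ ∏ i : Fin k, (if i = j then δ else 1) := by
                apply Finset.prod_le_prod
                · intro i _
                  exact Finset.sum_nonneg (fun x _ => by
                    by_cases h1 : i < j
                    · simpa [h1] using ht0 i x
                    · by_cases h2 : i = j
                      · subst h2; simp [h1]
                      · simpa [h1, h2] using hμ0 i x)
                · intro i _
                  by_cases h1 : i < j
                  · simp only [h1, if_true, if_neg (ne_of_lt h1)]
                    exact ht1 i
                  · by_cases h2 : i = j
                    · subst h2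
                      simpa [h1] using hd i
                    · simp only [h1, if_false, h2]
                      exact le_of_eq (hμ1 i)
            _ = δ := by
                rw [Finset.prod_ite_eq' Finset.univ j (fun _ => δ)]
                simp
      _ = (k : ℝ) * δ := by simp [mul_comm]
  linarith
end
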